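/- Let q ≥ 2 and let χ be a primitive Dirichlet character modulo q. Let b be a positive integer, α > 0 a real number, and ℓ a positive half-integer (2ℓ ∈ ℤ_{≥1}) with q | 2ℓ. Then for every z > 0: (α/√(4πz)) Σ_{k∈ℤ} χ(k) e^{−α²(2ℓk/q + b)²/(4z)} = (G(χ)/(2ℓ)) Σ_{j∈ℤ} \bar{χ}(j) e^{−π²j²z/(α²ℓ²)} e^{πi b j/ℓ}. -/

import Mathlib

open scoped Real
open Complex

/-- The Gauss sum `G(χ) = Σ_{a=0}^{q−1} χ(a) e^{2πi a/q}` of a Dirichlet character mod `q`. -/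
noncomputable def gaussSumChar {q : ℕ} (χ : DirichletCharacter ℂ q) : ℂ :=
  ∑ a ∈ Finset.range q, χ (a : ZMod q) * Complex.exp (2 * Real.pi * I * (a : ℝ) / (q : ℝ))

lemma mySumGauss (A : ℝ) (hA : 0 < A) (x : ℝ) :
    Summable (fun m : ℤ ↦ cexp (-(π:ℂ) * A * (m + x)^2)) := by
  have h := (summable_jacobiTheta₂_term_iff (I*A*x) (I*A)).mpr (by simpa using hA)
  have h2 := h.mul_left (cexp (-(π:ℂ) * A * x^2))
  refine h2.congr fun n => ?_
  rw [jacobiTheta₂_term, ← Complex.exp_add]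
  congr 1
  linear_combination ((π:ℂ)*A*(n:ℂ)*(2*(x:ℂ)+(n:ℂ))) * I_sq

lemma mySumFourier (A : ℝ) (hA : 0 < A) (x : ℝ) :
    Summable (fun j : ℤ ↦ cexp (-(π:ℂ) / A * j^2 + 2*π*I*j*x)) := by
  have h := (summable_jacobiTheta₂_term_iff (x : ℂ) (I / A)).mpr
    (by simpa using inv_pos.mpr hA)
  refine h.congr fun n => ?_
  rw [jacobiTheta₂_term]
  congr 1
  have hA' : (A:ℂ) ≠ 0 := ofReal_ne_zero.mpr hA.ne'
  field_simp
  linear_combination ((n:ℂ)^2) * I_sq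

lemma myThetaShift {A : ℝ} (hA : 0 < A) (x : ℝ) :
    ∑' m : ℤ, cexp (-(π:ℂ) * A * ((m:ℂ) + x)^2)
      = (↑(Real.sqrt A))⁻¹ * ∑' j : ℤ, cexp (-(π:ℂ) / A * j^2 + 2*π*I*j*x) := by
  have hA0 : (A:ℂ) ≠ 0 := ofReal_ne_zero.mpr hA.ne'
  have hre : 0 < (((A⁻¹ : ℝ)) : ℂ).re := by simpa using inv_pos.mpr hA
  have h := Complex.tsum_exp_neg_quadratic hre (I * x)
  have e1 : (fun n : ℤ => cexp (-(π:ℂ) * ((A⁻¹:ℝ):ℂ) * n^2 + 2*π*(I*↑x)*n))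
      = fun n : ℤ => cexp (-(π:ℂ) / A * n^2 + 2*π*I*n*x) := by
    funext n
    congr 1
    push_cast
    ring
  have e2 : (fun n : ℤ => cexp (-(π:ℂ) / ((A⁻¹:ℝ):ℂ) * ((n:ℂ) + I*(I*↑x))^2))
      = fun n : ℤ => cexp (-(π:ℂ) * A * ((n:ℂ) - x)^2) := by
    funext n
    congr 1
    push_cast
    rw [div_inv_eq_mul]
    linear_combination (-(π:ℂ)*(A:ℂ)*((x:ℂ)^2*(I^2-1) + 2*(n:ℂ)*(x:ℂ))) * I_sq
  rw [e1, e2] at h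
  have hcoef : 1 / (((A⁻¹:ℝ)):ℂ) ^ ((1:ℂ)/2) = ((Real.sqrt A : ℝ) : ℂ) := by
    rw [show ((1:ℂ)/2) = (((1/2 : ℝ):ℝ):ℂ) by norm_num,
      ← Complex.ofReal_cpow (inv_nonneg.mpr hA.le), ← Real.sqrt_eq_rpow, Real.sqrt_inv]
    rw [one_div, ← Complex.ofReal_inv, inv_inv]
  rw [hcoef] at h
  have hs : ((Real.sqrt A : ℝ):ℂ) ≠ 0 := ofReal_ne_zero.mpr (Real.sqrt_pos.mpr hA).ne'
  rw [h, ← mul_assoc, inv_mul_cancel₀ hs, one_mul,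
    ← (Equiv.neg ℤ).tsum_eq (fun n : ℤ => cexp (-(π:ℂ)*(A:ℂ)*((n:ℂ) - (x:ℂ))^2))]
  refine tsum_congr fun m => ?_
  simp only [Equiv.neg_apply]
  congr 1
  push_cast
  ring

lemma zmod_sum_eq_range {q : ℕ} [NeZero q] (f : ZMod q → ℂ) :
    ∑ a : ZMod q, f a = ∑ i ∈ Finset.range q, f (i : ZMod q) := by
  refine Finset.sum_nbij' (fun a : ZMod q => a.val) (fun i : ℕ => (i : ZMod q))
    (fun a _ => Finset.mem_range.mpr (ZMod.val_lt a)) (fun i _ => Finset.mem_univ _)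
    (fun a _ => ZMod.natCast_zmod_val a) (fun i hi => ZMod.val_cast_of_lt (Finset.mem_range.mp hi))
    (fun a _ => by rw [ZMod.natCast_zmod_val])

lemma myGaussEval {q : ℕ} [NeZero q] (χ : DirichletCharacter ℂ q) (hχ : χ.IsPrimitive) (j : ℤ) :
    ∑ r ∈ Finset.range q, χ ((r : ℕ) : ZMod q) * cexp (2*π*I*(j:ℂ)*(r:ℂ)/(q:ℂ))
      = (starRingEnd ℂ) (χ ((j : ℤ) : ZMod q)) * gaussSumChar χ := by
  have key := gaussSum_mulShift_of_isPrimitive (ZMod.stdAddChar (N := q)) hχ ((j : ZMod q))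
  have h1 : gaussSumChar χ = gaussSum χ (ZMod.stdAddChar (N := q)) := by
    rw [gaussSumChar, gaussSum, zmod_sum_eq_range]
    refine Finset.sum_congr rfl fun i _ => ?_
    rw [show ((i : ℕ) : ZMod q) = ((i : ℤ) : ZMod q) by push_cast; rfl, ZMod.stdAddChar_coe]
    push_cast
    ring_nf
  have h2 : ∑ r ∈ Finset.range q, χ ((r : ℕ) : ZMod q) * cexp (2*π*I*(j:ℂ)*(r:ℂ)/(q:ℂ))
      = gaussSum χ ((ZMod.stdAddChar (N := q)).mulShift ((j : ZMod q))) := by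
    rw [gaussSum, zmod_sum_eq_range]
    refine Finset.sum_congr rfl fun i _ => ?_
    congr 1
    rw [AddChar.mulShift_apply, show ((j : ZMod q)) * ((i : ℕ) : ZMod q) = ((j * i : ℤ) : ZMod q)
      by push_cast; rfl, ZMod.stdAddChar_coe]
    congr 1
    push_cast
    ring
  have h3 : χ⁻¹ ((j : ZMod q)) = (starRingEnd ℂ) (χ ((j : ZMod q))) := by
    rw [← MulChar.star_apply']
    rfl
  rw [h2, key, h3, h1]

lemma tsum_int_residue {q : ℕ} [NeZero q] (f : ℤ → ℂ) (hf : Summable f) :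
    ∑' k : ℤ, f k = ∑ r : Fin q, ∑' m : ℤ, f (m * q + (r : ℤ)) := by
  have hinj : ∀ r : Fin q, Function.Injective (fun m : ℤ => m * q + (r : ℤ)) := by
    intro r m₁ m₂ h
    simpa [Ne.symm (NeZero.ne' (q:ℤ)), mul_left_inj', NeZero.ne q] using h
  have hsum : ∀ r : Fin q, Summable (fun m : ℤ => f (m * q + (r : ℤ))) :=
    fun r => hf.comp_injective (hinj r)
  rw [← ((Int.divModEquiv q).symm).tsum_eq f]
  have heq : (fun p : ℤ × Fin q => f ((Int.divModEquiv q).symm p))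
      = fun p => f (p.1 * q + (p.2 : ℤ)) := by
    funext p; simp [Int.divModEquiv]
  rw [heq]
  have hs : Summable (fun p : ℤ × Fin q => f (p.1 * q + (p.2 : ℤ))) := by
    have h := ((Int.divModEquiv q).symm).summable_iff.mpr hf
    exact h.congr fun p => by simp [Int.divModEquiv, Function.comp]
  rw [Summable.tsum_prod' hs (fun m => Summable.of_finite)]
  rw [tsum_congr (fun m => tsum_fintype _)]
  exact Summable.tsum_finsetSum (fun r _ => hsum r)


/-- let `q ≥ 2`, `χ` a primitive Dirichlet character mod `q`, `b ≥ 1` an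
integer, `α > 0`, and `ℓ` a positive half-integer (`2ℓ ∈ ℤ_{≥1}`) with `q ∣ 2ℓ`. Then for
every `z > 0`:
`(α/√(4πz)) Σ_{k∈ℤ} χ(k) e^{−α²(2ℓk/q+b)²/(4z)}
  = (G(χ)/(2ℓ)) Σ_{j∈ℤ} χ̄(j) e^{−π²j²z/(α²ℓ²)} e^{πi b j/ℓ}`. -/
theorem theta_series_identity_with_character (q : ℕ) (hq : 2 ≤ q)
    (χ : DirichletCharacter ℂ q) (hχ : χ.IsPrimitive)
    (b : ℕ) (hb : 0 < b) (α : ℝ) (hα : 0 < α) (ℓ : ℝ)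
    (hℓ : ∃ L : ℕ, 0 < L ∧ ((L : ℝ) = 2 * ℓ) ∧ q ∣ L)
    (z : ℝ) (hz : 0 < z) :
    ((α / Real.sqrt (4 * Real.pi * z) : ℝ) : ℂ) *
        ∑' k : ℤ, χ ((k : ZMod q)) *
          Complex.exp (-(((α ^ 2 * (2 * ℓ * (k : ℝ) / (q : ℝ) + (b : ℝ)) ^ 2 / (4 * z)) : ℝ) : ℂ)) =
      (gaussSumChar χ / ((2 * ℓ : ℝ) : ℂ)) *
        ∑' j : ℤ, (starRingEnd ℂ) (χ ((j : ZMod q))) *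
          Complex.exp (-(((Real.pi ^ 2 * (j : ℝ) ^ 2 * z / (α ^ 2 * ℓ ^ 2)) : ℝ) : ℂ)) *
          Complex.exp (Real.pi * I * (b : ℝ) * (j : ℝ) / (ℓ : ℂ)) := by
  obtain ⟨L, hLpos, hLeq, hqdvd⟩ := hℓ
  haveI : NeZero q := ⟨by omega⟩
  have hqR : (0:ℝ) < q := by exact_mod_cast Nat.pos_of_ne_zero (by omega)
  have hLR : (0:ℝ) < L := by exact_mod_cast hLpos
  have hℓpos : 0 < ℓ := by nlinarith
  have hπ := Real.pi_pos
  set B : ℝ := α^2 * (L:ℝ)^2 / (4*π*z*(q:ℝ)^2) with hBdef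
  have hB : 0 < B := by positivity
  set c : ℝ := (b:ℝ)*(q:ℝ)/(L:ℝ) with hcdef
  set f : ℤ → ℂ := fun k => χ ((k : ZMod q)) * cexp (-(π:ℂ)*B*((k:ℂ)+c)^2) with hfdef
  have hqC : (q:ℂ) ≠ 0 := by exact_mod_cast hqR.ne'
  have hLC2 : ((L:ℕ):ℂ) = 2*(ℓ:ℂ) := by exact_mod_cast hLeq
  have hLCne : ((L:ℕ):ℂ) ≠ 0 := by exact_mod_cast hLR.ne'
  have hℓC : (ℓ:ℂ) ≠ 0 := ofReal_ne_zero.mpr hℓpos.ne'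
  have hαC : (α:ℂ) ≠ 0 := ofReal_ne_zero.mpr hα.ne'
  have hzC : (z:ℂ) ≠ 0 := ofReal_ne_zero.mpr hz.ne'
  have hπC : ((π:ℝ):ℂ) ≠ 0 := ofReal_ne_zero.mpr hπ.ne'
  -- Step A
  have hLHS1 : ∑' k : ℤ, χ ((k : ZMod q)) *
      Complex.exp (-(((α ^ 2 * (2 * ℓ * (k : ℝ) / (q : ℝ) + (b : ℝ)) ^ 2 / (4 * z)) : ℝ) : ℂ))
      = ∑' k : ℤ, f k := by
    refine tsum_congr fun k => ?_
    rw [hfdef]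
    congr 2
    have hx : (α ^ 2 * (2 * ℓ * (k : ℝ) / (q : ℝ) + (b : ℝ)) ^ 2 / (4 * z)) = π*B*((k:ℝ)+c)^2 := by
      rw [hBdef, hcdef, show (2:ℝ)*ℓ = (L:ℝ) from hLeq.symm]
      field_simp
    rw [hx]
    push_cast
    ring
  -- Step B : summability
  have hgc : Summable (fun k : ℤ => cexp (-(π:ℂ)*B*((k:ℂ)+c)^2)) := mySumGauss B hB c
  have hf : Summable f := by
    apply Summable.of_norm
    refine Summable.of_nonneg_of_le (fun k => norm_nonneg _) (fun k => ?_)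
      (summable_norm_iff.mpr hgc)
    rw [hfdef]
    simp only
    rw [norm_mul]
    exact mul_le_of_le_one_left (norm_nonneg _) (χ.norm_le_one _)
  have hBq : 0 < B * (q:ℝ)^2 := by positivity
  -- Step C : split + inner theta transformation
  have hsplit := tsum_int_residue (q := q) f hf
  have hinner : ∀ r : Fin q, ∑' m : ℤ, f (m * q + (r:ℤ))
      = χ (((r:ℕ) : ZMod q)) * ((((Real.sqrt (B*(q:ℝ)^2)) : ℝ):ℂ)⁻¹ *
        ∑' j : ℤ, cexp (-(π:ℂ)/((B*(q:ℝ)^2 : ℝ):ℂ) * j^2 + 2*π*I*j*((((r:ℝ)+c)/q : ℝ):ℂ))) := by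
    intro r
    have hterm : ∀ m : ℤ, f (m*q + (r:ℤ)) = χ (((r:ℕ):ZMod q)) *
        cexp (-(π:ℂ)*((B*(q:ℝ)^2 : ℝ):ℂ)*((m:ℂ) + ((((r:ℝ)+c)/q : ℝ):ℂ))^2) := by
      intro m
      rw [hfdef]
      simp only
      congr 1
      · congr 1
        push_cast [ZMod.natCast_self]
        ring
      · congr 1
        push_cast
        field_simp
        ring
    rw [tsum_congr hterm, tsum_mul_left, myThetaShift hBq (((r:ℝ)+c)/q)]
  -- Step D : swap finite sum and tsum
  have hstep2 : ∑' k : ℤ, f k = (((Real.sqrt (B*(q:ℝ)^2) : ℝ)):ℂ)⁻¹ *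
      ∑' j : ℤ, ∑ r : Fin q, χ (((r:ℕ):ZMod q)) *
        cexp (-(π:ℂ)/((B*(q:ℝ)^2:ℝ):ℂ) * j^2 + 2*π*I*j*((((r:ℝ)+c)/q : ℝ):ℂ)) := by
    have hcomm : ∀ r : Fin q, χ (((r:ℕ) : ZMod q)) * ((((Real.sqrt (B*(q:ℝ)^2)) : ℝ):ℂ)⁻¹ *
        ∑' j : ℤ, cexp (-(π:ℂ)/((B*(q:ℝ)^2:ℝ):ℂ) * j^2 + 2*π*I*j*((((r:ℝ)+c)/q : ℝ):ℂ)))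
        = (((Real.sqrt (B*(q:ℝ)^2) : ℝ)):ℂ)⁻¹ * (χ (((r:ℕ) : ZMod q)) *
          ∑' j : ℤ, cexp (-(π:ℂ)/((B*(q:ℝ)^2:ℝ):ℂ) * j^2 + 2*π*I*j*((((r:ℝ)+c)/q : ℝ):ℂ))) :=
      fun r => mul_left_comm _ _ _
    rw [hsplit, Finset.sum_congr rfl fun r _ => hinner r,
      Finset.sum_congr rfl fun r _ => hcomm r, ← Finset.mul_sum]
    congr 1
    have hswap : ∑' j : ℤ, ∑ r : Fin q, χ (((r:ℕ):ZMod q)) *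
        cexp (-(π:ℂ)/((B*(q:ℝ)^2:ℝ):ℂ) * j^2 + 2*π*I*j*((((r:ℝ)+c)/q : ℝ):ℂ))
        = ∑ r : Fin q, ∑' j : ℤ, χ (((r:ℕ):ZMod q)) *
          cexp (-(π:ℂ)/((B*(q:ℝ)^2:ℝ):ℂ) * j^2 + 2*π*I*j*((((r:ℝ)+c)/q : ℝ):ℂ)) :=
      Summable.tsum_finsetSum (fun r _ => ((mySumFourier (B*(q:ℝ)^2) hBq (((r:ℝ)+c)/q)).mul_left _))
    rw [hswap]
    exact Finset.sum_congr rfl fun r _ => (tsum_mul_left).symm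
  -- Step E : Gauss sum evaluation
  have hGauss : ∀ j : ℤ, (∑ r : Fin q, χ (((r:ℕ):ZMod q)) *
      cexp (-(π:ℂ)/((B*(q:ℝ)^2:ℝ):ℂ) * j^2 + 2*π*I*j*((((r:ℝ)+c)/q : ℝ):ℂ)))
      = cexp (-(π:ℂ)/((B*(q:ℝ)^2:ℝ):ℂ) * j^2 + 2*π*I*j*((c/q : ℝ):ℂ)) *
        ((starRingEnd ℂ) (χ ((j : ZMod q))) * gaussSumChar χ) := by
    intro j
    have step1 : ∀ r : Fin q, χ (((r:ℕ):ZMod q)) *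
        cexp (-(π:ℂ)/((B*(q:ℝ)^2:ℝ):ℂ) * j^2 + 2*π*I*j*((((r:ℝ)+c)/q : ℝ):ℂ))
        = cexp (-(π:ℂ)/((B*(q:ℝ)^2:ℝ):ℂ) * j^2 + 2*π*I*j*((c/q : ℝ):ℂ)) *
          (χ (((r:ℕ):ZMod q)) * cexp (2*π*I*(j:ℂ)*(((r:ℕ)):ℂ)/(q:ℂ))) := by
      intro r
      have harg : (-(π:ℂ)/((B*(q:ℝ)^2:ℝ):ℂ) * (j:ℂ)^2 + 2*π*I*(j:ℂ)*((((r:ℝ)+c)/q : ℝ):ℂ))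
          = (-(π:ℂ)/((B*(q:ℝ)^2:ℝ):ℂ) * (j:ℂ)^2 + 2*π*I*(j:ℂ)*((c/q : ℝ):ℂ))
            + (2*π*I*(j:ℂ)*(((r:ℕ)):ℂ)/(q:ℂ)) := by
        push_cast
        field_simp
        ring
      rw [harg, Complex.exp_add]
      ring
    rw [Finset.sum_congr rfl fun r _ => step1 r, ← Finset.mul_sum]
    congr 1
    rw [Fin.sum_univ_eq_sum_range
      (fun i : ℕ => χ ((i:ZMod q)) * cexp (2*π*I*(j:ℂ)*(i:ℂ)/(q:ℂ))) q]
    exact myGaussEval χ hχ j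
  -- Step F : identify the exponentials with the RHS form
  have hW : ∀ j : ℤ, cexp (-(π:ℂ)/((B*(q:ℝ)^2:ℝ):ℂ) * j^2 + 2*π*I*j*((c/q : ℝ):ℂ))
      = Complex.exp (-(((Real.pi ^ 2 * (j : ℝ) ^ 2 * z / (α ^ 2 * ℓ ^ 2)) : ℝ) : ℂ)) *
        Complex.exp (Real.pi * I * (b : ℝ) * (j : ℝ) / (ℓ : ℂ)) := by
    intro j
    rw [← Complex.exp_add]
    congr 1
    have r1 : (π/(B*(q:ℝ)^2) * (j:ℝ)^2 : ℝ) = π^2*(j:ℝ)^2*z/(α^2*ℓ^2) := by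
      rw [hBdef, hLeq]
      field_simp
      ring
    have r2 : (2*π*(j:ℝ)*(c/q) : ℝ) = π*(b:ℝ)*(j:ℝ)/ℓ := by
      rw [hcdef, hLeq]
      field_simp
    calc -(π:ℂ)/((B*(q:ℝ)^2:ℝ):ℂ) * (j:ℂ)^2 + 2*π*I*(j:ℂ)*((c/q : ℝ):ℂ)
        = -((π/(B*(q:ℝ)^2) * (j:ℝ)^2 : ℝ):ℂ) + I*((2*π*(j:ℝ)*(c/q) : ℝ):ℂ) := by
          push_cast; ring
      _ = _ := by rw [r1, r2]; push_cast; ring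
  have hterm2 : ∀ j : ℤ, cexp (-(π:ℂ)/((B*(q:ℝ)^2:ℝ):ℂ) * j^2 + 2*π*I*j*((c/q : ℝ):ℂ)) *
      ((starRingEnd ℂ) (χ ((j : ZMod q))) * gaussSumChar χ)
      = gaussSumChar χ * ((starRingEnd ℂ) (χ ((j : ZMod q))) *
          Complex.exp (-(((Real.pi ^ 2 * (j : ℝ) ^ 2 * z / (α ^ 2 * ℓ ^ 2)) : ℝ) : ℂ)) *
          Complex.exp (Real.pi * I * (b : ℝ) * (j : ℝ) / (ℓ : ℂ))) := by
    intro j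
    rw [hW j]
    ring
  -- constants
  have h4 : (0:ℝ) < 4*π*z := by positivity
  have hsq : Real.sqrt (B*(q:ℝ)^2) = α*(L:ℝ)/Real.sqrt (4*π*z) := by
    rw [show B*(q:ℝ)^2 = (α*(L:ℝ)/Real.sqrt (4*π*z))^2 by
      rw [div_pow, Real.sq_sqrt h4.le, hBdef]; field_simp]
    exact Real.sqrt_sq (by positivity)
  have hconst : (α/Real.sqrt (4*π*z)) * (Real.sqrt (B*(q:ℝ)^2))⁻¹ = (2*ℓ)⁻¹ := by
    rw [hsq, ← hLeq]
    have h5 : Real.sqrt (4*π*z) ≠ 0 := by positivity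
    field_simp
  -- final assembly
  rw [hLHS1, hstep2, tsum_congr (fun j => hGauss j), tsum_congr (fun j => hterm2 j),
    tsum_mul_left, div_eq_mul_inv (gaussSumChar χ)]
  have hc2 : ((α / Real.sqrt (4 * Real.pi * z) : ℝ) : ℂ) *
      (((Real.sqrt (B*(q:ℝ)^2) : ℝ)):ℂ)⁻¹ = (((2 * ℓ : ℝ)):ℂ)⁻¹ := by
    rw [← Complex.ofReal_inv, ← Complex.ofReal_mul, hconst, Complex.ofReal_inv]
  rw [← hc2]
  ring
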